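/- arXiv:1812.00377 — 2 statements merged into one kernel-verified Lean document; each statement's English description precedes it below -/
import Mathlib

section
/- Let (X, 𝔅, μ) be a probability space and (T^t)_{t∈ℝ} a measure-preserving flow on X. Let f ∈ L²(X, μ) with ∫ f dμ = 0. If f ∘ T^t does not converge to 0 in the weak L² topology as t → ∞, then there exist a sequence t_n → ∞ and a function ψ ∈ L²(X, μ) which is not μ-almost everywhere constant, such that f ∘ T^{t_n} → ψ and f ∘ T^{-t_n} → ψ in the weak L² topology. -/
open MeasureTheory Filter Topology Set
open scoped RealInnerProductSpace

section aux
variable {E : Type*} [NormedAddCommGroup E] [InnerProductSpace ℝ E] [CompleteSpace E]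

lemma aux_subseq {ι : Type*} [Countable ι] (a : ℕ → ι → ℝ) (B : ℝ)
    (hb : ∀ n i, a n i ∈ Set.Icc (-B) B) :
    ∃ φ : ℕ → ℕ, StrictMono φ ∧ ∀ i, ∃ L, Tendsto (fun n => a (φ n) i) atTop (𝓝 L) := by
  have hc : IsCompact (Set.univ.pi fun _ : ι => Set.Icc (-B) B) :=
    isCompact_univ_pi fun _ => isCompact_Icc
  obtain ⟨L, -, φ, hφ, hLim⟩ := hc.tendsto_subseq (x := a)
    (fun n => by simp only [Set.mem_pi, Set.mem_univ, forall_true_left]; exact fun i => hb n i)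
  exact ⟨φ, hφ, fun i => ⟨L i, tendsto_pi_nhds.1 hLim i⟩⟩

lemma aux_span_limits (S : Set E) (x : ℕ → E)
    (hconv : ∀ z ∈ S, ∃ L : ℝ, Tendsto (fun n => ⟪x n, z⟫) atTop (𝓝 L)) :
    ∀ z ∈ Submodule.span ℝ S, ∃ L : ℝ, Tendsto (fun n => ⟪x n, z⟫) atTop (𝓝 L) := by
  intro z hz
  induction hz using Submodule.span_induction with
  | mem z hzS => exact hconv z hzS
  | zero => exact ⟨0, by simpa using tendsto_const_nhds⟩
  | add u v hu hv hLu hLv =>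
      obtain ⟨Lu, hLu⟩ := hLu; obtain ⟨Lv, hLv⟩ := hLv
      exact ⟨Lu + Lv, by simpa [inner_add_right] using hLu.add hLv⟩
  | smul c u hu hLu =>
      obtain ⟨Lu, hLu⟩ := hLu
      exact ⟨c * Lu, by simpa [real_inner_smul_right] using hLu.const_mul c⟩

end aux

section aux2
variable {E : Type*} [NormedAddCommGroup E] [InnerProductSpace ℝ E] [CompleteSpace E]

lemma aux_dense_ext (V : Submodule ℝ E) (x : ℕ → E) (ψ : E) (R : ℝ)
    (hbd : ∀ n, ‖x n‖ ≤ R) (hψ : ‖ψ‖ ≤ R)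
    (h : ∀ z ∈ V, Tendsto (fun n => ⟪x n, z⟫) atTop (𝓝 ⟪ψ, z⟫)) :
    ∀ y ∈ closure (V : Set E), Tendsto (fun n => ⟪x n, y⟫) atTop (𝓝 ⟪ψ, y⟫) := by
  intro y hy
  have hR1 : (0:ℝ) < R + 1 := lt_of_le_of_lt (le_trans (norm_nonneg _) hψ) (lt_add_one R)
  rw [Metric.tendsto_atTop]
  intro ε hε
  obtain ⟨z, hzV, hz⟩ : ∃ z ∈ (V : Set E), dist y z < ε / 3 / (R + 1) := by
    rcases Metric.mem_closure_iff.1 hy (ε / 3 / (R + 1)) (div_pos (div_pos hε (by norm_num)) hR1) with ⟨z, hz1, hz2⟩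
    exact ⟨z, hz1, hz2⟩
  have hzn : ‖y - z‖ < ε / 3 / (R + 1) := by rwa [dist_eq_norm] at hz
  have h3 : ∀ w : E, ‖w‖ ≤ R → |⟪w, y⟫ - ⟪w, z⟫| ≤ ε / 3 := by
    intro w hw
    rw [← inner_sub_right]
    calc |⟪w, y - z⟫| ≤ ‖w‖ * ‖y - z‖ := abs_real_inner_le_norm w (y - z)
      _ ≤ (R + 1) * (ε / 3 / (R + 1)) := by
          apply mul_le_mul (le_trans hw (le_of_lt (lt_add_one R))) hzn.le (norm_nonneg _) hR1.le
      _ = ε / 3 := by field_simp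
  obtain ⟨N, hN⟩ := (Metric.tendsto_atTop.1 (h z hzV)) (ε / 3) (by positivity)
  refine ⟨N, fun n hn => ?_⟩
  have := hN n hn
  rw [Real.dist_eq] at this ⊢
  have a1 := abs_sub_le (⟪x n, y⟫) (⟪x n, z⟫) (⟪ψ, y⟫)
  have a2 := abs_sub_le (⟪x n, z⟫) (⟪ψ, z⟫) (⟪ψ, y⟫)
  have h1 := h3 (x n) (hbd n)
  have h2 := h3 ψ hψ
  have h2' : |⟪ψ, z⟫ - ⟪ψ, y⟫| ≤ ε / 3 := by rw [abs_sub_comm]; exact h2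
  linarith

end aux2

section aux3
variable {E : Type*} [NormedAddCommGroup E] [InnerProductSpace ℝ E] [CompleteSpace E]

lemma aux_weak_limit (S : Set E) (x : ℕ → E) (R : ℝ)
    (hmem : ∀ n, x n ∈ (Submodule.span ℝ S).topologicalClosure)
    (hbd : ∀ n, ‖x n‖ ≤ R)
    (hconv : ∀ z ∈ S, ∃ L : ℝ, Tendsto (fun n => ⟪x n, z⟫) atTop (𝓝 L)) :
    ∃ ψ, ψ ∈ (Submodule.span ℝ S).topologicalClosure ∧ ‖ψ‖ ≤ R ∧
      ∀ y : E, Tendsto (fun n => ⟪x n, y⟫) atTop (𝓝 ⟪ψ, y⟫) := by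
  set V := Submodule.span ℝ S with hV
  set H := V.topologicalClosure with hH
  have hR0 : (0:ℝ) ≤ R := le_trans (norm_nonneg _) (hbd 0)
  have hR1 : (0:ℝ) < R + 1 := lt_of_le_of_lt hR0 (lt_add_one R)
  -- limits exist on the span
  have hVlim : ∀ z ∈ V, ∃ L : ℝ, Tendsto (fun n => ⟪x n, z⟫) atTop (𝓝 L) :=
    aux_span_limits S x hconv
  -- limits exist on the closure
  have hHlim : ∀ y ∈ H, ∃ L : ℝ, Tendsto (fun n => ⟪x n, y⟫) atTop (𝓝 L) := by
    intro y hy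
    have hyc : y ∈ closure (V : Set E) := hy
    have hcauchy : CauchySeq (fun n => ⟪x n, y⟫) := by
      rw [Metric.cauchySeq_iff]
      intro ε hε
      obtain ⟨z, hzV, hz⟩ :=
        Metric.mem_closure_iff.1 hyc (ε / 3 / (R + 1)) (div_pos (div_pos hε (by norm_num)) hR1)
      have hzn : ‖y - z‖ < ε / 3 / (R + 1) := by rwa [dist_eq_norm] at hz
      have h3 : ∀ k, |⟪x k, y⟫ - ⟪x k, z⟫| ≤ ε / 3 := by
        intro k
        rw [← inner_sub_right]
        calc |⟪x k, y - z⟫| ≤ ‖x k‖ * ‖y - z‖ := abs_real_inner_le_norm _ _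
          _ ≤ (R + 1) * (ε / 3 / (R + 1)) := by
              exact mul_le_mul (le_trans (hbd k) (le_of_lt (lt_add_one R))) hzn.le
                (norm_nonneg _) hR1.le
          _ = ε / 3 := by field_simp
      obtain ⟨L, hL⟩ := hVlim z hzV
      obtain ⟨N, hN⟩ := Metric.cauchySeq_iff.1 hL.cauchySeq (ε / 3) (by positivity)
      refine ⟨N, fun m hm n hn => ?_⟩
      have hmn := hN m hm n hn
      rw [Real.dist_eq] at hmn ⊢
      have a1 := abs_sub_le (⟪x m, y⟫) (⟪x m, z⟫) (⟪x n, y⟫)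
      have a2 := abs_sub_le (⟪x m, z⟫) (⟪x n, z⟫) (⟪x n, y⟫)
      have h3m := h3 m
      have h3n := h3 n
      have h3n' : |⟪x n, z⟫ - ⟪x n, y⟫| ≤ ε / 3 := by rw [abs_sub_comm]; exact h3 n
      linarith
    exact cauchySeq_tendsto_of_complete hcauchy
  -- complete subspace, projection
  haveI : CompleteSpace H := V.isClosed_topologicalClosure.isComplete.completeSpace_coe
  -- limits exist everywhere
  have hlim : ∀ y : E, ∃ L : ℝ, Tendsto (fun n => ⟪x n, y⟫) atTop (𝓝 L) := by
    intro y
    set p : E := (H.orthogonalProjectionOnto y : E) with hp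
    have hperp : y - p ∈ Hᗮ := Submodule.sub_starProjection_mem_orthogonal (K := H) y
    have heq : ∀ n, ⟪x n, y⟫ = ⟪x n, p⟫ := by
      intro n
      have h0 : ⟪x n, y - p⟫ = 0 := (Submodule.mem_orthogonal H (y - p)).1 hperp (x n) (hmem n)
      have := inner_sub_right (𝕜 := ℝ) (x n) y p
      rw [h0] at this
      linarith [this]
    obtain ⟨L, hL⟩ := hHlim p (H.orthogonalProjectionOnto y).2
    exact ⟨L, by simpa only [heq] using hL⟩
  choose L hL using hlim
  -- the limit functional
  have hLadd : ∀ y z : E, L (y + z) = L y + L z := by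
    intro y z
    refine tendsto_nhds_unique (hL (y + z)) ?_
    simpa only [inner_add_right] using (hL y).add (hL z)
  have hLsmul : ∀ (c : ℝ) (y : E), L (c • y) = c * L y := by
    intro c y
    refine tendsto_nhds_unique (hL (c • y)) ?_
    simpa only [real_inner_smul_right] using (hL y).const_mul c
  have hLbd : ∀ y : E, |L y| ≤ R * ‖y‖ := by
    intro y
    have habs : Tendsto (fun n => |⟪x n, y⟫|) atTop (𝓝 |L y|) := (hL y).abs
    refine le_of_tendsto habs (Eventually.of_forall fun n => ?_)
    calc |⟪x n, y⟫| ≤ ‖x n‖ * ‖y‖ := abs_real_inner_le_norm _ _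
      _ ≤ R * ‖y‖ := mul_le_mul_of_nonneg_right (hbd n) (norm_nonneg _)
  let φ : E →ₗ[ℝ] ℝ :=
    { toFun := L
      map_add' := hLadd
      map_smul' := hLsmul }
  let Φ : E →L[ℝ] ℝ := φ.mkContinuous R fun y => by
    simpa [Real.norm_eq_abs, φ] using hLbd y
  set ψ : E := (InnerProductSpace.toDual ℝ E).symm Φ with hψdef
  have hψy : ∀ y : E, ⟪ψ, y⟫ = L y := fun y => InnerProductSpace.toDual_symm_apply
  have htend : ∀ y : E, Tendsto (fun n => ⟪x n, y⟫) atTop (𝓝 ⟪ψ, y⟫) := by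
    intro y; rw [hψy y]; exact hL y
  -- norm bound
  have hψR : ‖ψ‖ ≤ R := by
    rcases eq_or_ne ψ 0 with h0 | h0
    · rw [h0, norm_zero]; exact hR0
    · have : ‖ψ‖ * ‖ψ‖ ≤ R * ‖ψ‖ := by
        rw [← real_inner_self_eq_norm_mul_norm, hψy ψ]
        exact le_trans (le_abs_self _) (hLbd ψ)
      exact le_of_mul_le_mul_right this (norm_pos_iff.2 h0)
  -- membership
  have hψH : ψ ∈ H := by
    set q : E := (H.orthogonalProjectionOnto ψ : E) with hq
    have hperp : ψ - q ∈ Hᗮ := Submodule.sub_starProjection_mem_orthogonal (K := H) ψ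
    have h1 : ⟪ψ, ψ - q⟫ = 0 := by
      rw [hψy]
      refine tendsto_nhds_unique (hL (ψ - q)) ?_
      have : ∀ n, ⟪x n, ψ - q⟫ = 0 := fun n =>
        (Submodule.mem_orthogonal H (ψ - q)).1 hperp (x n) (hmem n)
      simpa only [this] using (tendsto_const_nhds : Tendsto (fun _ : ℕ => (0:ℝ)) atTop (𝓝 0))
    have h2 : ⟪q, ψ - q⟫ = 0 :=
      (Submodule.mem_orthogonal H (ψ - q)).1 hperp q (H.orthogonalProjectionOnto ψ).2
    have h3 : ⟪ψ - q, ψ - q⟫ = (0:ℝ) := by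
      have := inner_sub_left (𝕜 := ℝ) ψ q (ψ - q)
      rw [h1, h2] at this; linarith [this]
    have h4 : ψ - q = 0 := inner_self_eq_zero.1 h3
    have : ψ = q := by rwa [sub_eq_zero] at h4
    rw [this]; exact (H.orthogonalProjectionOnto ψ).2
  exact ⟨ψ, hψH, hψR, htend⟩

end aux3

open Filter

lemma aux_enum (t : ℕ → ℝ) :
    ∃ e : ℕ → ℝ, (∀ n, ∃ k, e k = t n) ∧ (∃ k, e k = 0) ∧
      (∀ i j, ∃ k, e k = e i + e j) ∧ (∀ i, ∃ k, e k = -e i) := by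
  classical
  let ev : List (ℤ × ℕ) → ℝ := fun l => (l.map fun p => (p.1 : ℝ) * t p.2).sum
  obtain ⟨u, hu⟩ := exists_surjective_nat (List (ℤ × ℕ))
  refine ⟨ev ∘ u, ?_, ?_, ?_, ?_⟩
  · intro n
    obtain ⟨k, hk⟩ := hu [(1, n)]
    exact ⟨k, by simp [ev, hk]⟩
  · obtain ⟨k, hk⟩ := hu []
    exact ⟨k, by simp [ev, hk]⟩
  · intro i j
    obtain ⟨k, hk⟩ := hu (u i ++ u j)
    refine ⟨k, ?_⟩
    simp only [Function.comp_apply, hk, ev, List.map_append, List.sum_append]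
  · intro i
    obtain ⟨k, hk⟩ := hu ((u i).map fun p => (-p.1, p.2))
    refine ⟨k, ?_⟩
    simp only [Function.comp_apply, hk]
    have : ∀ l : List (ℤ × ℕ), ev (l.map fun p => (-p.1, p.2)) = -ev l := by
      intro l
      induction l with
      | nil => simp [ev]
      | cons a l ih =>
          simp only [List.map_cons, List.sum_cons, ev] at ih ⊢
          push_cast
          linarith
    exact this (u i)
open MeasureTheory Filter Topology Set
open scoped RealInnerProductSpace
section aux5
variable {E : Type*} [NormedAddCommGroup E] [InnerProductSpace ℝ E] [CompleteSpace E]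

lemma aux_span_tendsto (S : Set E) (x : ℕ → E) (ψ : E)
    (h : ∀ z ∈ S, Tendsto (fun n => ⟪x n, z⟫) atTop (𝓝 ⟪ψ, z⟫)) :
    ∀ z ∈ Submodule.span ℝ S, Tendsto (fun n => ⟪x n, z⟫) atTop (𝓝 ⟪ψ, z⟫) := by
  intro z hz
  induction hz using Submodule.span_induction with
  | mem z hzS => exact h z hzS
  | zero => simpa using (tendsto_const_nhds : Tendsto (fun _ : ℕ => (0:ℝ)) atTop _)
  | add u v hu hv hLu hLv => simpa only [inner_add_right] using hLu.add hLv
  | smul c u hu hLu => simpa only [real_inner_smul_right] using hLu.const_mul c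

lemma aux_proj_ext (S : Set E) (x : ℕ → E) (ψ : E)
    (hx : ∀ n, x n ∈ (Submodule.span ℝ S).topologicalClosure)
    (hψ : ψ ∈ (Submodule.span ℝ S).topologicalClosure)
    (h : ∀ y ∈ closure ((Submodule.span ℝ S : Submodule ℝ E) : Set E),
      Tendsto (fun n => ⟪x n, y⟫) atTop (𝓝 ⟪ψ, y⟫)) :
    ∀ y : E, Tendsto (fun n => ⟪x n, y⟫) atTop (𝓝 ⟪ψ, y⟫) := by
  intro y
  set V := Submodule.span ℝ S
  set H := V.topologicalClosure with hH
  haveI : CompleteSpace H := V.isClosed_topologicalClosure.isComplete.completeSpace_coe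
  set p : E := (H.orthogonalProjectionOnto y : E) with hp
  have hperp : y - p ∈ Hᗮ := Submodule.sub_starProjection_mem_orthogonal (K := H) y
  have hxy : ∀ n, ⟪x n, y⟫ = ⟪x n, p⟫ := by
    intro n
    have h0 : ⟪x n, y - p⟫ = 0 := (Submodule.mem_orthogonal H (y - p)).1 hperp (x n) (hx n)
    have := inner_sub_right (𝕜 := ℝ) (x n) y p
    rw [h0] at this; linarith
  have hψy : ⟪ψ, y⟫ = ⟪ψ, p⟫ := by
    have h0 : ⟪ψ, y - p⟫ = 0 := (Submodule.mem_orthogonal H (y - p)).1 hperp ψ hψ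
    have := inner_sub_right (𝕜 := ℝ) ψ y p
    rw [h0] at this; linarith
  rw [hψy]
  have hpH : p ∈ closure ((V : Submodule ℝ E) : Set E) := (H.orthogonalProjectionOnto y).2
  simpa only [← hxy] using h p hpH

end aux5

open MeasureTheory Filter Topology Set
open scoped RealInnerProductSpace

noncomputable section koop

variable {X : Type*} [MeasurableSpace X] {μ : Measure X} [IsProbabilityMeasure μ]
  {T : ℝ → X → X}

/-- The flow maps as measurable equivalences. -/
def Teq (hmeas : ∀ t, Measurable (T t)) (hT0 : T 0 = id)
    (hTadd : ∀ s t, T (s + t) = T s ∘ T t) (t : ℝ) : X ≃ᵐ X where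
  toFun := T t
  invFun := T (-t)
  left_inv := fun x => by
    have h1 : T (-t) (T t x) = (T (-t) ∘ T t) x := rfl
    rw [h1, ← hTadd (-t) t]
    norm_num [hT0]
  right_inv := fun x => by
    have h1 : T t (T (-t) x) = (T t ∘ T (-t)) x := rfl
    rw [h1, ← hTadd t (-t)]
    norm_num [hT0]
  measurable_toFun := hmeas t
  measurable_invFun := hmeas (-t)

/-- The Koopman operator on L². -/
def UU (hpres : ∀ t, MeasurePreserving (T t) μ μ) (t : ℝ) (x : Lp ℝ 2 μ) : Lp ℝ 2 μ :=
  Lp.compMeasurePreserving (T t) (hpres t) x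

variable (hmeas : ∀ t, Measurable (T t)) (hT0 : T 0 = id)
  (hTadd : ∀ s t, T (s + t) = T s ∘ T t) (hpres : ∀ t, MeasurePreserving (T t) μ μ)

set_option linter.unusedSectionVars false
include hmeas hT0 hTadd hpres

lemma coeFn_UU (t : ℝ) (x : Lp ℝ 2 μ) : UU hpres t x =ᵐ[μ] ⇑x ∘ T t :=
  Lp.coeFn_compMeasurePreserving x (hpres t)

lemma norm_UU (t : ℝ) (x : Lp ℝ 2 μ) : ‖UU hpres t x‖ = ‖x‖ :=
  Lp.norm_compMeasurePreserving x (hpres t)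

lemma UU_comp (s t : ℝ) (x : Lp ℝ 2 μ) : UU hpres t (UU hpres s x) = UU hpres (s + t) x := by
  apply Lp.ext
  have h1 : UU hpres t (UU hpres s x) =ᵐ[μ] ⇑(UU hpres s x) ∘ T t := coeFn_UU hmeas hT0 hTadd hpres t _
  have h2 : ⇑(UU hpres s x) ∘ T t =ᵐ[μ] (⇑x ∘ T s) ∘ T t :=
    (hpres t).quasiMeasurePreserving.ae_eq_comp (coeFn_UU hmeas hT0 hTadd hpres s x)
  have h3 : (⇑x ∘ T s) ∘ T t = ⇑x ∘ T (s + t) := by rw [hTadd s t]; rfl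
  have h4 : UU hpres (s + t) x =ᵐ[μ] ⇑x ∘ T (s + t) := coeFn_UU hmeas hT0 hTadd hpres (s + t) x
  exact (h1.trans (h2.trans (by rw [h3]))).trans h4.symm

lemma UU_zero (x : Lp ℝ 2 μ) : UU hpres 0 x = x := by
  apply Lp.ext
  have h1 : UU hpres 0 x =ᵐ[μ] ⇑x ∘ T 0 := coeFn_UU hmeas hT0 hTadd hpres 0 x
  rwa [hT0] at h1

lemma inner_UU (t : ℝ) (x y : Lp ℝ 2 μ) : ⟪UU hpres t x, UU hpres t y⟫ = ⟪x, y⟫ := by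
  rw [L2.inner_def, L2.inner_def]
  have h1 : (fun a => ⟪(UU hpres t x) a, (UU hpres t y) a⟫) =ᵐ[μ]
      fun a => ⟪x (T t a), y (T t a)⟫ := by
    filter_upwards [coeFn_UU hmeas hT0 hTadd hpres t x, coeFn_UU hmeas hT0 hTadd hpres t y] with a ha hb
    rw [ha, hb]; rfl
  rw [integral_congr_ae h1]
  exact (hpres t).integral_comp' (f := Teq hmeas hT0 hTadd t) (fun a => ⟪x a, y a⟫)

lemma inner_UU_shift (a b : ℝ) (x y : Lp ℝ 2 μ) :
    ⟪UU hpres a x, UU hpres b y⟫ = ⟪UU hpres (a - b) x, y⟫ := by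
  have h := inner_UU hmeas hT0 hTadd hpres (-b) (UU hpres a x) (UU hpres b y)
  rw [UU_comp hmeas hT0 hTadd hpres, UU_comp hmeas hT0 hTadd hpres] at h
  rw [← h]
  norm_num [UU_zero hmeas hT0 hTadd hpres]
  rw [show a + -b = a - b by ring]

lemma UU_adj (t : ℝ) (x y : Lp ℝ 2 μ) : ⟪UU hpres t x, y⟫ = ⟪x, UU hpres (-t) y⟫ := by
  have h := inner_UU_shift hmeas hT0 hTadd hpres 0 (-t) x y
  rw [UU_zero hmeas hT0 hTadd hpres, zero_sub, neg_neg] at h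
  exact h.symm

lemma inner_L2_eq (x y : Lp ℝ 2 μ) : ⟪x, y⟫ = ∫ a, x a * y a ∂μ := by
  rw [L2.inner_def]
  apply integral_congr_ae
  filter_upwards with a
  simp [RCLike.inner_apply]
  ring

lemma UU_smul (t : ℝ) (c : ℝ) (x : Lp ℝ 2 μ) : UU hpres t (c • x) = c • UU hpres t x := by
  apply Lp.ext
  have h1 : UU hpres t (c • x) =ᵐ[μ] ⇑(c • x) ∘ T t := coeFn_UU hmeas hT0 hTadd hpres t _
  have h2 : ⇑(c • x) ∘ T t =ᵐ[μ] (c • ⇑x) ∘ T t :=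
    (hpres t).quasiMeasurePreserving.ae_eq_comp (Lp.coeFn_smul c x)
  have h3 : (c • ⇑x) ∘ T t = c • (⇑x ∘ T t) := rfl
  have h4 : ⇑(c • UU hpres t x) =ᵐ[μ] c • ⇑(UU hpres t x) := Lp.coeFn_smul c _
  have h5 : (c • ⇑(UU hpres t x) : X → ℝ) =ᵐ[μ] c • (⇑x ∘ T t) :=
    (coeFn_UU hmeas hT0 hTadd hpres t x).mono fun a ha => by
      simp only [Pi.smul_apply, ha]
  exact (h1.trans (h2.trans (by rw [h3]))).trans (h4.trans h5).symm

/-- Koopman operator as a linear map. -/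
def Ulin (hmeas : ∀ t, Measurable (T t)) (hT0 : T 0 = id)
    (hTadd : ∀ s t, T (s + t) = T s ∘ T t) (hpres : ∀ t, MeasurePreserving (T t) μ μ)
    (t : ℝ) : Lp ℝ 2 μ →ₗ[ℝ] Lp ℝ 2 μ where
  toFun := UU hpres t
  map_add' := fun x y => (Lp.compMeasurePreserving (T t) (hpres t)).map_add x y
  map_smul' := fun c x => UU_smul hmeas hT0 hTadd hpres t c x

lemma UU_continuous (t : ℝ) : Continuous (UU hpres t : Lp ℝ 2 μ → Lp ℝ 2 μ) :=
  (Lp.isometry_compMeasurePreserving (hpres t)).continuous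

lemma UU_mem_closure (t : ℝ) (S : Set (Lp ℝ 2 μ))
    (hS : ∀ z ∈ S, UU hpres t z ∈ Submodule.span ℝ S) :
    ∀ z ∈ (Submodule.span ℝ S).topologicalClosure,
      UU hpres t z ∈ (Submodule.span ℝ S).topologicalClosure := by
  intro z hz
  set V := Submodule.span ℝ S with hV
  have hzc : z ∈ closure (V : Set (Lp ℝ 2 μ)) := hz
  have h1 : UU hpres t z ∈ closure (UU hpres t '' (V : Set (Lp ℝ 2 μ))) := by
    apply image_closure_subset_closure_image (UU_continuous hmeas hT0 hTadd hpres t)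
    exact Set.mem_image_of_mem _ hzc
  have h2 : UU hpres t '' (V : Set (Lp ℝ 2 μ)) ⊆ (V : Set (Lp ℝ 2 μ)) := by
    have himg : UU hpres t '' (V : Set (Lp ℝ 2 μ)) =
        (Submodule.map (Ulin hmeas hT0 hTadd hpres t) V : Set (Lp ℝ 2 μ)) := rfl
    rw [himg, Submodule.map_span]
    have : (UU hpres t) '' S ⊆ (V : Set (Lp ℝ 2 μ)) := by
      rintro - ⟨w, hw, rfl⟩
      exact hS w hw
    have hle : Submodule.span ℝ ((Ulin hmeas hT0 hTadd hpres t) '' S) ≤ V :=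
      Submodule.span_le.2 this
    exact hle
  exact closure_mono h2 h1

lemma toLp_inner {g : X → ℝ} (hg : MemLp g 2 μ) (x : Lp ℝ 2 μ) :
    ⟪x, hg.toLp g⟫ = ∫ a, x a * g a ∂μ := by
  rw [inner_L2_eq hmeas hT0 hTadd hpres]
  apply integral_congr_ae
  filter_upwards [hg.coeFn_toLp] with a ha
  rw [ha]

lemma UU_toLp_ae {g : X → ℝ} (hg : MemLp g 2 μ) (t : ℝ) :
    UU hpres t (hg.toLp g) =ᵐ[μ] g ∘ T t :=
  (coeFn_UU hmeas hT0 hTadd hpres t _).trans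
    ((hpres t).quasiMeasurePreserving.ae_eq_comp hg.coeFn_toLp)

lemma UU_pairing {fc g : X → ℝ} (hfc : MemLp fc 2 μ) (hg : MemLp g 2 μ) (t : ℝ) :
    ⟪UU hpres t (hfc.toLp fc), hg.toLp g⟫ = ∫ a, fc (T t a) * g a ∂μ := by
  rw [inner_L2_eq hmeas hT0 hTadd hpres]
  apply integral_congr_ae
  filter_upwards [UU_toLp_ae hmeas hT0 hTadd hpres hfc t, hg.coeFn_toLp] with a h1 h2
  rw [h1, h2]; rfl

lemma UU_one (t : ℝ) :
    UU hpres t ((memLp_const (1:ℝ) (μ := μ) (p := 2)).toLp _) =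
      (memLp_const (1:ℝ) (μ := μ) (p := 2)).toLp _ := by
  apply Lp.ext
  refine (UU_toLp_ae hmeas hT0 hTadd hpres (memLp_const (1:ℝ)) t).trans ?_
  exact ((memLp_const (1:ℝ) (μ := μ) (p := 2)).coeFn_toLp).symm

lemma UU_mean_zero {fc : X → ℝ} (hfc : MemLp fc 2 μ) (hint : ∫ x, fc x ∂μ = 0) (t : ℝ) :
    ⟪UU hpres t (hfc.toLp fc), (memLp_const (1:ℝ) (μ := μ) (p := 2)).toLp _⟫ = 0 := by
  have h1 := inner_UU hmeas hT0 hTadd hpres t (hfc.toLp fc)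
    ((memLp_const (1:ℝ) (μ := μ) (p := 2)).toLp _)
  rw [UU_one hmeas hT0 hTadd hpres t] at h1
  rw [h1, toLp_inner hmeas hT0 hTadd hpres (memLp_const (1:ℝ)) (hfc.toLp fc)]
  have : ∫ a, (hfc.toLp fc) a * 1 ∂μ = ∫ a, (hfc.toLp fc) a ∂μ := by simp
  rw [this]
  rw [integral_congr_ae hfc.coeFn_toLp]
  exact hint

end koop
-- main theorem, to be appended after aux+enum+koop
theorem stmt_0 {X : Type*} [MeasurableSpace X] (μ : Measure X) [IsProbabilityMeasure μ]
    (T : ℝ → X → X) (hmeas : ∀ t, Measurable (T t)) (hT0 : T 0 = id)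
    (hTadd : ∀ s t, T (s + t) = T s ∘ T t)
    (hpres : ∀ t, MeasurePreserving (T t) μ μ)
    (f : X → ℝ) (hf : MemLp f 2 μ) (hfint : ∫ x, f x ∂μ = 0)
    (hnot : ¬ ∀ g : X → ℝ, MemLp g 2 μ →
      Tendsto (fun t : ℝ => ∫ x, f (T t x) * g x ∂μ) atTop (𝓝 0)) :
    ∃ (tseq : ℕ → ℝ) (ψ : X → ℝ),
      Tendsto tseq atTop atTop ∧ MemLp ψ 2 μ ∧
      (¬ ∃ c : ℝ, ∀ᵐ x ∂μ, ψ x = c) ∧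
      (∀ g : X → ℝ, MemLp g 2 μ →
        Tendsto (fun n => ∫ x, f (T (tseq n) x) * g x ∂μ) atTop (𝓝 (∫ x, ψ x * g x ∂μ))) ∧
      (∀ g : X → ℝ, MemLp g 2 μ →
        Tendsto (fun n => ∫ x, f (T (-(tseq n)) x) * g x ∂μ) atTop (𝓝 (∫ x, ψ x * g x ∂μ))) := by
  classical
  push_neg at hnot
  obtain ⟨g₀, hg₀, hng⟩ := hnot
  set U : ℝ → Lp ℝ 2 μ → Lp ℝ 2 μ := UU hpres with hU
  set F : Lp ℝ 2 μ := hf.toLp f with hF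
  set G₀ : Lp ℝ 2 μ := hg₀.toLp g₀ with hG₀
  set onep : Lp ℝ 2 μ := (memLp_const (1:ℝ) (μ := μ) (p := 2)).toLp _ with honep
  have hfun : (fun t : ℝ => ∫ x, f (T t x) * g₀ x ∂μ) = fun t => ⟪U t F, G₀⟫ := by
    funext t
    exact (UU_pairing hmeas hT0 hTadd hpres hf hg₀ t).symm
  rw [hfun] at hng
  -- step 1 : a sequence going to infinity along which the inner products stay large
  obtain ⟨ε, hε, hfreq⟩ : ∃ ε > 0, ∃ᶠ s in (atTop : Filter ℝ), ε ≤ |⟪U s F, G₀⟫| := by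
    by_contra hcon
    push_neg at hcon
    apply hng
    rw [Metric.tendsto_nhds]
    intro δ hδ
    have h2 := hcon (δ/2) (by positivity)
    filter_upwards [h2] with a ha
    rw [Real.dist_eq, sub_zero]
    linarith
  have hts : ∀ n : ℕ, ∃ s : ℝ, (n : ℝ) ≤ s ∧ ε ≤ |⟪U s F, G₀⟫| := by
    intro n
    obtain ⟨b, hb1, hb2⟩ := (frequently_atTop.1 hfreq) (n : ℝ)
    exact ⟨b, hb1, hb2⟩
  choose t0 ht0ge ht0ε using hts
  -- step 2 : enumeration of the group generated by the sequence
  obtain ⟨e, he_t, he0, he_add, he_neg⟩ := aux_enum t0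
  -- step 3 : master subsequence extraction
  set R : ℝ := ‖F‖ with hR
  have harr : ∀ (n : ℕ) (p : ℕ × ℕ),
      (fun (n : ℕ) (p : ℕ × ℕ) => ⟪U (t0 n + e p.1) F, U (e p.2) F⟫) n p ∈
        Set.Icc (-(R*R)) (R*R) := by
    intro n p
    have h1 : |⟪U (t0 n + e p.1) F, U (e p.2) F⟫| ≤ R * R := by
      calc |⟪U (t0 n + e p.1) F, U (e p.2) F⟫| ≤ ‖U (t0 n + e p.1) F‖ * ‖U (e p.2) F‖ :=
            abs_real_inner_le_norm _ _
        _ = R * R := by rw [hU, norm_UU hmeas hT0 hTadd hpres, norm_UU hmeas hT0 hTadd hpres]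
    exact abs_le.1 h1
  obtain ⟨φ, hφmono, hφconv⟩ :=
    aux_subseq (fun (n : ℕ) (p : ℕ × ℕ) => ⟪U (t0 n + e p.1) F, U (e p.2) F⟫) (R*R) harr
  set c : ℕ → ℝ := fun n => t0 (φ n) with hc
  have hcmem : ∀ n, ∃ k, e k = c n := fun n => he_t (φ n)
  have hcge : ∀ n : ℕ, (n : ℝ) ≤ c n := by
    intro n
    calc (n : ℝ) ≤ (φ n : ℝ) := Nat.cast_le.2 hφmono.le_apply
      _ ≤ t0 (φ n) := ht0ge (φ n)
  have hctend : Tendsto c atTop atTop :=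
    tendsto_atTop_mono hcge tendsto_natCast_atTop_atTop
  -- the subspace
  set S : Set (Lp ℝ 2 μ) := Set.range (fun i => U (e i) F) with hS
  set V : Submodule ℝ (Lp ℝ 2 μ) := Submodule.span ℝ S with hV
  set H := V.topologicalClosure with hH
  have hSH : ∀ i, U (e i) F ∈ H := fun i =>
    Submodule.le_topologicalClosure V (Submodule.subset_span ⟨i, rfl⟩)
  -- step 4 : the weak limits P i
  have hPex : ∀ i : ℕ, ∃ P, P ∈ H ∧ ‖P‖ ≤ R ∧
      ∀ y, Tendsto (fun n => ⟪U (c n + e i) F, y⟫) atTop (𝓝 ⟪P, y⟫) := by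
    intro i
    apply aux_weak_limit S _ R
    · intro n
      obtain ⟨k1, hk1⟩ := hcmem n
      obtain ⟨k, hk⟩ := he_add k1 i
      rw [hk1] at hk
      have hq : U (c n + e i) F = U (e k) F := by rw [hk]
      rw [hq]
      exact hSH k
    · intro n
      rw [hU, norm_UU hmeas hT0 hTadd hpres]
    · rintro z ⟨j, rfl⟩
      exact hφconv (i, j)
  choose P hPH hPR hPlim using hPex
  obtain ⟨i0, hi0⟩ := he0
  have hP0lim : ∀ y, Tendsto (fun n => ⟪U (c n) F, y⟫) atTop (𝓝 ⟪P i0, y⟫) := by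
    intro y
    have h1 := hPlim i0 y
    simpa only [hi0, add_zero] using h1
  have hP0ne : P i0 ≠ 0 := by
    intro h0
    have h1 := hP0lim G₀
    rw [h0, inner_zero_left] at h1
    have h2 : Tendsto (fun n => |⟪U (c n) F, G₀⟫|) atTop (𝓝 0) := by
      simpa using h1.abs
    have h3 : ε ≤ 0 :=
      le_of_tendsto_of_tendsto' tendsto_const_nhds h2 (fun n => ht0ε (φ n))
    linarith
  -- step 5 : the limit ψ
  have hΨex : ∃ Ψ, Ψ ∈ H ∧ ‖Ψ‖ ≤ R ∧
      ∀ y, Tendsto (fun m => ⟪U (-(c m)) (P i0), y⟫) atTop (𝓝 ⟪Ψ, y⟫) := by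
    apply aux_weak_limit S _ R
    · intro m
      apply UU_mem_closure hmeas hT0 hTadd hpres (-(c m)) S _ _ (hPH i0)
      rintro z ⟨j, rfl⟩
      rw [← hU]
      obtain ⟨kc, hkc⟩ := hcmem m
      obtain ⟨kn, hkn⟩ := he_neg kc
      obtain ⟨k, hk⟩ := he_add j kn
      have h1 : U (-(c m)) (U (e j) F) = U (e j + -(c m)) F :=
        UU_comp hmeas hT0 hTadd hpres (e j) (-(c m)) F
      rw [h1]
      have h2 : e j + -(c m) = e k := by rw [hk, hkn, hkc]
      rw [h2]
      exact Submodule.subset_span ⟨k, rfl⟩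
    · intro m
      rw [hU, norm_UU hmeas hT0 hTadd hpres]
      exact hPR i0
    · rintro z ⟨j, rfl⟩
      refine ⟨⟪P i0, P j⟫, ?_⟩
      have heq : ∀ m, ⟪U (-(c m)) (P i0), U (e j) F⟫ = ⟪U (c m + e j) F, P i0⟫ := by
        intro m
        rw [hU, UU_adj hmeas hT0 hTadd hpres, neg_neg,
          UU_comp hmeas hT0 hTadd hpres (e j) (c m) F, real_inner_comm]
        ring_nf
      have h3 := (hPlim j (P i0)).congr (fun m => (heq m).symm)
      have h4 : (inner ℝ (P i0) (P j) : ℝ) = inner ℝ (P j) (P i0) := real_inner_comm _ _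
      rw [h4]
      exact h3
  obtain ⟨Ψ, hΨH, hΨR, hΨlim⟩ := hΨex
  -- basic facts about Ψ
  have hΨgen : ∀ j, (inner ℝ Ψ (U (e j) F) : ℝ) = inner ℝ (P j) (P i0) := by
    intro j
    have heq : ∀ m, (inner ℝ (U (-(c m)) (P i0)) (U (e j) F) : ℝ) =
        inner ℝ (U (c m + e j) F) (P i0) := by
      intro m
      rw [hU, UU_adj hmeas hT0 hTadd hpres, neg_neg,
        UU_comp hmeas hT0 hTadd hpres (e j) (c m) F, real_inner_comm]
      ring_nf
    exact tendsto_nhds_unique (hΨlim (U (e j) F))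
      ((hPlim j (P i0)).congr (fun m => (heq m).symm))
  have hΨF : (inner ℝ Ψ F : ℝ) = inner ℝ (P i0) (P i0) := by
    have h1 := hΨgen i0
    rw [hi0, hU, UU_zero hmeas hT0 hTadd hpres] at h1
    exact h1
  have hΨFpos : (0:ℝ) < inner ℝ Ψ F := by
    rw [hΨF, real_inner_self_eq_norm_mul_norm]
    have hn : 0 < ‖P i0‖ := norm_pos_iff.2 hP0ne
    exact mul_pos hn hn
  have hΨone : (inner ℝ Ψ onep : ℝ) = 0 := by
    have h1 : ∀ m, (inner ℝ (U (-(c m)) (P i0)) onep : ℝ) = inner ℝ (P i0) onep := by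
      intro m
      rw [hU, UU_adj hmeas hT0 hTadd hpres, neg_neg, honep, UU_one hmeas hT0 hTadd hpres]
    have h2 : Tendsto (fun m => (inner ℝ (U (-(c m)) (P i0)) onep : ℝ)) atTop
        (𝓝 (inner ℝ (P i0) onep)) := by
      simp only [h1]
      exact tendsto_const_nhds
    have h3 : (inner ℝ Ψ onep : ℝ) = inner ℝ (P i0) onep := tendsto_nhds_unique (hΨlim onep) h2
    have h4 : ∀ n, (inner ℝ (U (c n) F) onep : ℝ) = 0 := by
      intro n
      rw [hU, hF, honep]
      exact UU_mean_zero hmeas hT0 hTadd hpres hf hfint (c n)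
    have h5 : Tendsto (fun n => (inner ℝ (U (c n) F) onep : ℝ)) atTop (𝓝 0) := by
      simp only [h4]
      exact tendsto_const_nhds
    have h6 : (inner ℝ (P i0) onep : ℝ) = 0 := tendsto_nhds_unique (hP0lim onep) h5
    rw [h3, h6]
  -- the symmetry identity
  have hstar : ∀ i ibar, e ibar = -e i →
      (inner ℝ (P i0) (P ibar) : ℝ) = inner ℝ (P i) (P i0) := by
    intro i ibar hbar
    have hm : ∀ m, (inner ℝ (P ibar) (U (c m) F) : ℝ) = inner ℝ (P i0) (U (c m + e i) F) := by
      intro m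
      have heq : ∀ n, (inner ℝ (U (c n + e ibar) F) (U (c m) F) : ℝ) =
          inner ℝ (U (c n) F) (U (c m + e i) F) := by
        intro n
        rw [hU, inner_UU_shift hmeas hT0 hTadd hpres, inner_UU_shift hmeas hT0 hTadd hpres]
        have harith : c n + e ibar - c m = c n - (c m + e i) := by rw [hbar]; ring
        rw [harith]
      exact tendsto_nhds_unique ((hPlim ibar (U (c m) F)).congr heq)
        (hP0lim (U (c m + e i) F))
    have hA2 : Tendsto (fun m => (inner ℝ (P ibar) (U (c m) F) : ℝ)) atTop
        (𝓝 (inner ℝ (P i0) (P ibar))) :=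
      (hP0lim (P ibar)).congr (fun m => real_inner_comm _ _)
    have hB2 : Tendsto (fun m => (inner ℝ (P i0) (U (c m + e i) F) : ℝ)) atTop
        (𝓝 (inner ℝ (P i) (P i0))) :=
      (hPlim i (P i0)).congr (fun m => real_inner_comm _ _)
    exact tendsto_nhds_unique (hA2.congr hm) hB2
  -- step 6 : diagonal sequence
  have hMex : ∀ j : ℕ, ∃ m, ∀ i, i ≤ j →
      |(inner ℝ (P i) (U (c m) F) : ℝ) - inner ℝ (P i0) (P i)| < 1/((j:ℝ)+1) := by
    intro j
    have hall : ∀ᶠ m in atTop, ∀ i ∈ Set.Iic j,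
        |(inner ℝ (P i) (U (c m) F) : ℝ) - inner ℝ (P i0) (P i)| < 1/((j:ℝ)+1) := by
      rw [eventually_all_finite (Set.finite_Iic j)]
      intro i hi
      have h1 : Tendsto (fun m => (inner ℝ (P i) (U (c m) F) : ℝ)) atTop
          (𝓝 (inner ℝ (P i0) (P i))) := (hP0lim (P i)).congr (fun m => real_inner_comm _ _)
      obtain ⟨N0, hN0⟩ := Metric.tendsto_atTop.1 h1 (1/((j:ℝ)+1)) (by positivity)
      filter_upwards [eventually_ge_atTop N0] with m hm
      have h2 := hN0 m hm
      rwa [Real.dist_eq] at h2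
    exact hall.exists.imp (fun m hm i hi => hm i hi)
  choose M hM using hMex
  have hNex : ∀ j : ℕ, ∃ n, (j:ℝ) ≤ c n - c (M j) ∧ ∀ i, i ≤ j →
      |(inner ℝ (U (c n + e i) F) (U (c (M j)) F) : ℝ) -
        inner ℝ (P i) (U (c (M j)) F)| < 1/((j:ℝ)+1) := by
    intro j
    have h1 : ∀ᶠ n in atTop, (j:ℝ) ≤ c n - c (M j) := by
      filter_upwards [hctend.eventually_ge_atTop ((j:ℝ) + c (M j))] with n hn
      linarith
    have h2 : ∀ᶠ n in atTop, ∀ i ∈ Set.Iic j,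
        |(inner ℝ (U (c n + e i) F) (U (c (M j)) F) : ℝ) -
          inner ℝ (P i) (U (c (M j)) F)| < 1/((j:ℝ)+1) := by
      rw [eventually_all_finite (Set.finite_Iic j)]
      intro i hi
      obtain ⟨N0, hN0⟩ :=
        Metric.tendsto_atTop.1 (hPlim i (U (c (M j)) F)) (1/((j:ℝ)+1)) (by positivity)
      filter_upwards [eventually_ge_atTop N0] with n hn
      have h3 := hN0 n hn
      rwa [Real.dist_eq] at h3
    exact ((h1.and h2).exists).imp (fun n hn => ⟨hn.1, fun i hi => hn.2 i hi⟩)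
  choose N hN1 hN2 using hNex
  set sq : ℕ → ℝ := fun j => c (N j) - c (M j) with hsq
  have hsq_ge : ∀ j : ℕ, (j:ℝ) ≤ sq j := hN1
  have hsq_tend : Tendsto sq atTop atTop :=
    tendsto_atTop_mono hsq_ge tendsto_natCast_atTop_atTop
  have hsqG : ∀ j, ∃ k, e k = sq j := by
    intro j
    obtain ⟨k1, hk1⟩ := hcmem (N j)
    obtain ⟨k2, hk2⟩ := hcmem (M j)
    obtain ⟨k3, hk3⟩ := he_neg k2
    obtain ⟨k, hk⟩ := he_add k1 k3
    exact ⟨k, by simp only [hk, hk1, hk3, hk2, hsq]; ring⟩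
  have hsqGneg : ∀ j, ∃ k, e k = -(sq j) := by
    intro j
    obtain ⟨k, hk⟩ := hsqG j
    obtain ⟨k2, hk2⟩ := he_neg k
    exact ⟨k2, by rw [hk2, hk]⟩
  -- the key convergence along the diagonal
  have hdiag : ∀ i, Tendsto (fun j => (inner ℝ (U (sq j + e i) F) F : ℝ)) atTop
      (𝓝 (inner ℝ (P i0) (P i))) := by
    intro i
    rw [Metric.tendsto_atTop]
    intro δ hδ
    obtain ⟨J0, hJ0⟩ := exists_nat_gt (2/δ)
    refine ⟨max i J0, fun j hj => ?_⟩
    have hji : i ≤ j := le_trans (le_max_left _ _) hj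
    have hjJ : J0 ≤ j := le_trans (le_max_right _ _) hj
    have hrw : (inner ℝ (U (sq j + e i) F) F : ℝ) =
        inner ℝ (U (c (N j) + e i) F) (U (c (M j)) F) := by
      rw [hU, inner_UU_shift hmeas hT0 hTadd hpres]
      have harith : c (N j) + e i - c (M j) = sq j + e i := by rw [hsq]; ring
      rw [harith]
    rw [Real.dist_eq, hrw]
    have e1 := hN2 j i hji
    have e2 := hM j i hji
    have hj1 : 1/((j:ℝ)+1) ≤ δ/2 := by
      have hj2 : (J0:ℝ) ≤ j := Nat.cast_le.2 hjJ
      have hj3 : 2/δ < (j:ℝ)+1 := by linarith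
      rw [div_lt_iff₀ hδ] at hj3
      rw [div_le_div_iff₀ (by positivity) (by norm_num : (0:ℝ) < 2)]
      linarith
    have htri := abs_sub_le (inner ℝ (U (c (N j) + e i) F) (U (c (M j)) F) : ℝ)
      (inner ℝ (P i) (U (c (M j)) F)) (inner ℝ (P i0) (P i))
    calc |(inner ℝ (U (c (N j) + e i) F) (U (c (M j)) F) : ℝ) - inner ℝ (P i0) (P i)|
        ≤ |(inner ℝ (U (c (N j) + e i) F) (U (c (M j)) F) : ℝ) -
            inner ℝ (P i) (U (c (M j)) F)| +
          |(inner ℝ (P i) (U (c (M j)) F) : ℝ) - inner ℝ (P i0) (P i)| := htri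
      _ < 1/((j:ℝ)+1) + 1/((j:ℝ)+1) := add_lt_add e1 e2
      _ ≤ δ/2 + δ/2 := add_le_add hj1 hj1
      _ = δ := by ring
  -- convergence on generators
  have hgen_fwd : ∀ z ∈ S, Tendsto (fun j => (inner ℝ (U (sq j) F) z : ℝ))
      atTop (𝓝 (inner ℝ Ψ z)) := by
    rintro z ⟨j', rfl⟩
    show Tendsto (fun j => (inner ℝ (U (sq j) F) (U (e j') F) : ℝ)) atTop
      (𝓝 (inner ℝ Ψ (U (e j') F)))
    obtain ⟨ibar, hibar⟩ := he_neg j'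
    have h1 : ∀ j, (inner ℝ (U (sq j) F) (U (e j') F) : ℝ) = inner ℝ (U (sq j + e ibar) F) F := by
      intro j
      rw [hU, inner_UU_shift hmeas hT0 hTadd hpres]
      have harith : sq j - e j' = sq j + e ibar := by rw [hibar]; ring
      rw [harith]
    have h2 := (hdiag ibar).congr (fun j => (h1 j).symm)
    rw [hΨgen j', ← hstar j' ibar hibar]
    exact h2
  have hgen_bwd : ∀ z ∈ S, Tendsto (fun j => (inner ℝ (U (-(sq j)) F) z : ℝ))
      atTop (𝓝 (inner ℝ Ψ z)) := by
    rintro z ⟨j', rfl⟩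
    show Tendsto (fun j => (inner ℝ (U (-(sq j)) F) (U (e j') F) : ℝ)) atTop
      (𝓝 (inner ℝ Ψ (U (e j') F)))
    have h1 : ∀ j, (inner ℝ (U (-(sq j)) F) (U (e j') F) : ℝ) = inner ℝ (U (sq j + e j') F) F := by
      intro j
      rw [hU, inner_UU_shift hmeas hT0 hTadd hpres]
      have harith : -(sq j) - e j' = -(sq j + e j') := by ring
      rw [harith, UU_adj hmeas hT0 hTadd hpres, neg_neg, real_inner_comm]
    have h2 := (hdiag j').congr (fun j => (h1 j).symm)
    have h4 : (inner ℝ Ψ (U (e j') F) : ℝ) = inner ℝ (P i0) (P j') := by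
      rw [hΨgen j']
      exact real_inner_comm _ _
    rw [h4]
    exact h2
  -- extend to the whole space
  have hfwd_all : ∀ y, Tendsto (fun j => (inner ℝ (U (sq j) F) y : ℝ)) atTop
      (𝓝 (inner ℝ Ψ y)) := by
    refine aux_proj_ext S _ Ψ ?_ hΨH ?_
    · intro n
      obtain ⟨k, hk⟩ := hsqG n
      rw [← hk]
      exact hSH k
    · intro y hy
      refine aux_dense_ext (Submodule.span ℝ S) _ Ψ R ?_ hΨR ?_ y hy
      · intro n
        rw [hU, norm_UU hmeas hT0 hTadd hpres]
      · exact aux_span_tendsto S _ Ψ hgen_fwd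
  have hbwd_all : ∀ y, Tendsto (fun j => (inner ℝ (U (-(sq j)) F) y : ℝ)) atTop
      (𝓝 (inner ℝ Ψ y)) := by
    refine aux_proj_ext S _ Ψ ?_ hΨH ?_
    · intro n
      obtain ⟨k, hk⟩ := hsqGneg n
      rw [← hk]
      exact hSH k
    · intro y hy
      refine aux_dense_ext (Submodule.span ℝ S) _ Ψ R ?_ hΨR ?_ y hy
      · intro n
        rw [hU, norm_UU hmeas hT0 hTadd hpres]
      · exact aux_span_tendsto S _ Ψ hgen_bwd
  -- final assembly
  refine ⟨sq, fun x => Ψ x, hsq_tend, Lp.memLp Ψ, ?_, ?_, ?_⟩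
  · rintro ⟨cst, hcst⟩
    have h1 : (inner ℝ Ψ onep : ℝ) = cst := by
      rw [honep, toLp_inner hmeas hT0 hTadd hpres (memLp_const (1:ℝ)) Ψ]
      have hae : ∀ᵐ a ∂μ, Ψ a * (1:ℝ) = cst := hcst.mono (fun a ha => by
        have ha' : (Ψ : X → ℝ) a = cst := ha
        rw [ha', mul_one])
      rw [integral_congr_ae hae]
      simp
    rw [hΨone] at h1
    have h2 : (inner ℝ Ψ F : ℝ) = 0 := by
      rw [hF, toLp_inner hmeas hT0 hTadd hpres hf Ψ]
      have hae : ∀ᵐ a ∂μ, Ψ a * f a = 0 := hcst.mono (fun a ha => by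
        have ha' : (Ψ : X → ℝ) a = cst := ha
        rw [ha', ← h1, zero_mul])
      rw [integral_congr_ae hae, integral_zero]
    linarith [hΨFpos]
  · intro g hg
    have hΨg : ∫ x, Ψ x * g x ∂μ = (inner ℝ Ψ (hg.toLp g) : ℝ) :=
      (toLp_inner hmeas hT0 hTadd hpres hg Ψ).symm
    have hGg : ∀ n:ℕ, ∫ x, f (T (sq n) x) * g x ∂μ = (inner ℝ (U (sq n) F) (hg.toLp g) : ℝ) := by
      intro n
      rw [hU, hF]
      exact (UU_pairing hmeas hT0 hTadd hpres hf hg (sq n)).symm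
    rw [hΨg]
    exact (hfwd_all (hg.toLp g)).congr (fun n => (hGg n).symm)
  · intro g hg
    have hΨg : ∫ x, Ψ x * g x ∂μ = (inner ℝ Ψ (hg.toLp g) : ℝ) :=
      (toLp_inner hmeas hT0 hTadd hpres hg Ψ).symm
    have hGg : ∀ n:ℕ, ∫ x, f (T (-(sq n)) x) * g x ∂μ =
        (inner ℝ (U (-(sq n)) F) (hg.toLp g) : ℝ) := by
      intro n
      rw [hU, hF]
      exact (UU_pairing hmeas hT0 hTadd hpres hf hg (-(sq n))).symm
    rw [hΨg]
    exact (hbwd_all (hg.toLp g)).congr (fun n => (hGg n).symm)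
end

section
/- Let H be a Hilbert space and (f_n) a sequence in H converging weakly to ψ ∈ H. Then there exists a subsequence (f_{n_j}) whose Cesàro averages (1/k) ∑_{j=1}^{k} f_{n_j} converge to ψ in norm as k → ∞. -/
open Filter Topology

theorem stmt_9 {H : Type*} [NormedAddCommGroup H] [InnerProductSpace ℝ H] [CompleteSpace H]
    (f : ℕ → H) (ψ : H)
    (hweak : ∀ h : H, Tendsto (fun n => (inner ℝ (f n) h : ℝ)) atTop (𝓝 (inner ℝ ψ h))) :
    ∃ φ : ℕ → ℕ, StrictMono φ ∧
      Tendsto (fun k : ℕ => ((k : ℝ))⁻¹ • ∑ j ∈ Finset.range k, f (φ j)) atTop (𝓝 ψ) := by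
  set g : ℕ → H := fun n => f n - ψ with hgdef
  have hg : ∀ h : H, Tendsto (fun n => (inner ℝ (g n) h : ℝ)) atTop (𝓝 0) := by
    intro h
    have := (hweak h).sub_const (inner ℝ ψ h)
    simpa [hgdef, inner_sub_left] using this
  -- boundedness
  obtain ⟨C, hC0, hC⟩ : ∃ C : ℝ, 0 ≤ C ∧ ∀ n, ‖g n‖ ≤ C := by
    obtain ⟨C, hC⟩ := banach_steinhaus (g := fun n => innerSL ℝ (g n)) (fun x => by
      obtain ⟨C, hC⟩ := (Metric.isBounded_range_of_tendsto _ ((hg x).norm)).subset_closedBall 0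
      exact ⟨C, fun i => by simpa using hC ⟨i, rfl⟩⟩)
    refine ⟨max C 0, le_max_right _ _, fun n => ?_⟩
    have := hC n
    rw [innerSL_apply_norm] at this
    exact this.trans (le_max_left _ _)
  -- selection
  have ex : ∀ N j : ℕ, ∃ m, N < m ∧ ∀ p ≤ N, |(inner ℝ (g p) (g m) : ℝ)| ≤ 1/(j+1) := by
    intro N j
    have hev : ∀ᶠ m in atTop, ∀ p ∈ Finset.range (N+1),
        |(inner ℝ (g p) (g m) : ℝ)| ≤ 1/(j+1) := by
      rw [Filter.eventually_all_finset]
      intro p _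
      have := (hg (g p)).abs
      have h2 : (0:ℝ) < 1/(j+1) := by positivity
      filter_upwards [Metric.tendsto_nhds.mp this _ h2] with m hm
      rw [real_inner_comm]
      simp only [Real.dist_eq, abs_zero, sub_zero, abs_abs] at hm
      exact hm.le
    obtain ⟨m, hm1, hm2⟩ := (hev.and (eventually_gt_atTop N)).exists
    exact ⟨m, hm2, fun p hp => hm1 p (Finset.mem_range.mpr (Nat.lt_succ_of_le hp))⟩
  choose F hF1 hF2 using ex
  set φ : ℕ → ℕ := fun j => Nat.rec 0 (fun j prev => F prev j) j with hφdef
  have hφsucc : ∀ j, φ (j+1) = F (φ j) j := fun j => rfl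
  have hφmono : StrictMono φ := strictMono_nat_of_lt_succ (fun j => by
    rw [hφsucc]; exact hF1 (φ j) j)
  have hφbound : ∀ j : ℕ, ∀ i ≤ j, |(inner ℝ (g (φ i)) (g (φ (j+1))) : ℝ)| ≤ 1/(j+1) := by
    intro j i hij
    rw [hφsucc]
    exact hF2 (φ j) j (φ i) (hφmono.monotone hij)
  -- norm estimate on partial sums
  set S : ℕ → H := fun k => ∑ j ∈ Finset.range k, g (φ j) with hSdef
  have hS : ∀ k : ℕ, ‖S k‖^2 ≤ k * (C^2 + 2) := by
    intro k
    induction k with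
    | zero => simp [hSdef]
    | succ k ih =>
      have hSplit : S (k+1) = S k + g (φ k) := Finset.sum_range_succ _ _
      have hInner : |(inner ℝ (S k) (g (φ k)) : ℝ)| ≤ 1 := by
        rcases Nat.eq_zero_or_pos k with hk | hk
        · simp [hk, hSdef]
        · obtain ⟨j, rfl⟩ := Nat.exists_eq_add_of_lt hk
          rw [hSdef]
          simp only [zero_add]
          rw [sum_inner]
          calc |∑ i ∈ Finset.range (j+1), (inner ℝ (g (φ i)) (g (φ (j+1))) : ℝ)|
              ≤ ∑ i ∈ Finset.range (j+1), |(inner ℝ (g (φ i)) (g (φ (j+1))) : ℝ)| :=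
                Finset.abs_sum_le_sum_abs _ _
            _ ≤ ∑ i ∈ Finset.range (j+1), 1/((j:ℝ)+1) := by
                refine Finset.sum_le_sum fun i hi => hφbound j i
                  (Nat.lt_succ_iff.mp (Finset.mem_range.mp hi))
            _ = 1 := by
                rw [Finset.sum_const, Finset.card_range, nsmul_eq_mul]
                push_cast
                field_simp
      have := norm_add_sq_real (S k) (g (φ k))
      rw [hSplit, this]
      have h1 : ‖g (φ k)‖^2 ≤ C^2 := by
        have := hC (φ k)
        nlinarith [norm_nonneg (g (φ k))]
      have h2 : 2 * (inner ℝ (S k) (g (φ k)) : ℝ) ≤ 2 := by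
        nlinarith [abs_le.mp hInner]
      push_cast
      nlinarith
  -- conclusion
  refine ⟨φ, hφmono, ?_⟩
  have key : Tendsto (fun k : ℕ => ((k : ℝ))⁻¹ • S k) atTop (𝓝 0) := by
    rw [tendsto_zero_iff_norm_tendsto_zero]
    refine squeeze_zero (fun k => norm_nonneg _) (fun k => ?_)
      (g := fun k : ℕ => Real.sqrt ((C^2+2) / k)) ?_
    · rcases Nat.eq_zero_or_pos k with hk | hk
      · simp [hk, Real.sqrt_nonneg]
      · have hkpos : (0:ℝ) < k := by exact_mod_cast hk
        rw [norm_smul, norm_inv, Real.norm_natCast]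
        apply Real.le_sqrt_of_sq_le
        have h1 : ((k:ℝ)⁻¹)^2 * ‖S k‖^2 ≤ ((k:ℝ)⁻¹)^2 * (k*(C^2+2)) :=
          mul_le_mul_of_nonneg_left (hS k) (by positivity)
        have h2 : ((k:ℝ)⁻¹)^2 * ((k:ℝ)*(C^2+2)) = (C^2+2)/k := by
          field_simp
        calc ((k:ℝ)⁻¹ * ‖S k‖)^2 = ((k:ℝ)⁻¹)^2 * ‖S k‖^2 := by ring
          _ ≤ (C^2+2)/k := by rw [← h2]; exact h1
    · have h := (Real.continuous_sqrt.tendsto 0).comp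
        (tendsto_const_div_atTop_nhds_zero_nat (C^2+2))
      rw [Real.sqrt_zero] at h
      exact h
  have heq : ∀ᶠ k : ℕ in atTop,
      ((k : ℝ))⁻¹ • ∑ j ∈ Finset.range k, f (φ j) = ψ + ((k : ℝ))⁻¹ • S k := by
    filter_upwards [eventually_gt_atTop 0] with k hk
    have hkne : ((k:ℝ)) ≠ 0 := by positivity
    have : ∑ j ∈ Finset.range k, f (φ j) = S k + (k:ℕ) • ψ := by
      rw [hSdef]
      simp [hgdef, Finset.sum_sub_distrib]
    rw [this, smul_add, ← Nat.cast_smul_eq_nsmul ℝ, smul_smul, inv_mul_cancel₀ hkne,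
      one_smul]
    abel
  rw [Filter.tendsto_congr' heq]
  simpa using (tendsto_const_nhds.add key)
end
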